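/- For real numbers λ₁, λ₂, λ₃, λ₄ with |λᵢ| < 1, pairwise distinct, and a nonnegative integer S, the sum over the closed first octant ∑_{j₁≥0} ∑_{j₂≥0} ∑_{j₃≥0} λ₁^{j₁} λ₂^{j₂} λ₃^{j₃} λ₄^{|S-j₁-j₂-j₃|} equals λ₁^{S+3}(1-λ₄²)/((λ₁-λ₂)(λ₁-λ₃)(λ₁-λ₄)(1-λ₁λ₄)) + λ₂^{S+3}(1-λ₄²)/((λ₂-λ₁)(λ₂-λ₃)(λ₂-λ₄)(1-λ₂λ₄)) + λ₃^{S+3}(1-λ₄²)/((λ₃-λ₁)(λ₃-λ₂)(λ₃-λ₄)(1-λ₃λ₄)) + λ₄^{S+3}/((λ₄-λ₁)(λ₄-λ₂)(λ₄-λ₃)). -/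

import Mathlib

set_option maxHeartbeats 1000000

noncomputable def Ufun (r : ℝ) (m : ℤ) : ℝ := if 0 ≤ m then r ^ m.natAbs else 0
noncomputable def Vfun (y : ℝ) (m : ℤ) : ℝ := if m < 0 then y ^ m.natAbs else 0

lemma summable_U (x r : ℝ) (m : ℤ) : Summable (fun j : ℕ => x ^ j * Ufun r (m - j)) := by
  apply summable_of_ne_finset_zero (s := Finset.range (m.natAbs + 1))
  intro j hj
  simp only [Finset.mem_range, not_lt] at hj
  have : ¬ (0 ≤ m - (j : ℤ)) := by omega
  simp only [Ufun, if_neg this, mul_zero]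

lemma sum_U (x r : ℝ) (hxr : x ≠ r) (m : ℤ) :
    ∑' j : ℕ, x ^ j * Ufun r (m - j) =
      r / (r - x) * Ufun r m + x / (x - r) * Ufun x m := by
  rcases lt_or_ge m 0 with hm | hm
  · have h0 : ∀ j : ℕ, x ^ j * Ufun r (m - j) = 0 := by
      intro j
      have : ¬ (0 ≤ m - (j : ℤ)) := by omega
      simp only [Ufun, if_neg this, mul_zero]
    simp only [h0, tsum_zero]
    simp [Ufun, not_le.mpr hm]
  · set n := m.natAbs with hn
    have hmn : (n : ℤ) = m := by omega
    have hxr' : x - r ≠ 0 := sub_ne_zero.mpr hxr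
    have h0 : ∀ j ∉ Finset.range (n + 1), x ^ j * Ufun r (m - j) = 0 := by
      intro j hj
      simp only [Finset.mem_range, not_lt] at hj
      have : ¬ (0 ≤ m - (j : ℤ)) := by omega
      simp only [Ufun, if_neg this, mul_zero]
    rw [tsum_eq_sum h0]
    have hterm : ∀ j ∈ Finset.range (n + 1), x ^ j * Ufun r (m - j) = x ^ j * r ^ (n + 1 - 1 - j) := by
      intro j hj
      simp only [Finset.mem_range] at hj
      have h1 : (0 : ℤ) ≤ m - j := by omega
      have h2 : (m - (j : ℤ)).natAbs = n + 1 - 1 - j := by omega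
      simp only [Ufun, if_pos h1, h2]
    rw [Finset.sum_congr rfl hterm]
    have hgs := geom_sum₂_mul x r (n + 1)
    have hU1 : Ufun r m = r ^ n := by simp [Ufun, hm, hn]
    have hU2 : Ufun x m = x ^ n := by simp [Ufun, hm, hn]
    rw [hU1, hU2]
    have : (∑ i ∈ Finset.range (n + 1), x ^ i * r ^ (n + 1 - 1 - i)) = (x ^ (n+1) - r ^ (n+1)) / (x - r) := by
      rw [eq_div_iff hxr', hgs]
    rw [this]
    have hrx' : r - x ≠ 0 := sub_ne_zero.mpr (Ne.symm hxr)
    field_simp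
    ring

lemma summable_V (x y : ℝ) (hx : |x| < 1) (hy : |y| < 1) (m : ℤ) :
    Summable (fun j : ℕ => x ^ j * Vfun y (m - j)) := by
  apply Summable.of_norm_bounded (g := fun j : ℕ => |x| ^ j)
  · exact summable_geometric_of_lt_one (abs_nonneg x) hx
  · intro j
    have hV : |Vfun y (m - j)| ≤ 1 := by
      unfold Vfun
      split
      · rw [abs_pow]
        exact pow_le_one₀ (abs_nonneg y) hy.le
      · simp
    calc ‖x ^ j * Vfun y (m - j)‖ = |x| ^ j * |Vfun y (m - j)| := by
          rw [Real.norm_eq_abs, abs_mul, abs_pow]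
      _ ≤ |x| ^ j * 1 := by
          exact mul_le_mul_of_nonneg_left hV (pow_nonneg (abs_nonneg x) j)
      _ = |x| ^ j := mul_one _

lemma sum_V (x y : ℝ) (hx : |x| < 1) (hy : |y| < 1) (m : ℤ) :
    ∑' j : ℕ, x ^ j * Vfun y (m - j) =
      x * y / (1 - x * y) * Ufun x m + 1 / (1 - x * y) * Vfun y m := by
  have hxy : |x * y| < 1 := by
    rw [abs_mul]
    nlinarith [abs_nonneg x, abs_nonneg y]
  have hxy' : (1 : ℝ) - x * y ≠ 0 := by
    intro h
    have : x * y = 1 := by linarith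
    rw [this] at hxy
    simp at hxy
  have hgeom : ∑' j : ℕ, (x * y) ^ j = (1 - x * y)⁻¹ :=
    tsum_geometric_of_norm_lt_one (by rwa [Real.norm_eq_abs])
  rcases lt_or_ge m 0 with hm | hm
  · have h0 : ∀ j : ℕ, x ^ j * Vfun y (m - j) = y ^ m.natAbs * (x * y) ^ j := by
      intro j
      have h1 : m - (j : ℤ) < 0 := by omega
      have h2 : (m - (j : ℤ)).natAbs = m.natAbs + j := by omega
      simp only [Vfun, if_pos h1, h2, pow_add, mul_pow]
      ring
    rw [tsum_congr h0, tsum_mul_left, hgeom]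
    have hU : Ufun x m = 0 := by simp [Ufun, not_le.mpr hm]
    have hV : Vfun y m = y ^ m.natAbs := by simp [Vfun, hm]
    rw [hU, hV]
    field_simp
    ring
  · set n := m.natAbs with hn
    have hmn : (n : ℤ) = m := by omega
    have hsum := Summable.sum_add_tsum_nat_add (n + 1) (summable_V x y hx hy m)
    have h0 : ∑ j ∈ Finset.range (n + 1), x ^ j * Vfun y (m - j) = 0 := by
      apply Finset.sum_eq_zero
      intro j hj
      simp only [Finset.mem_range] at hj
      have : ¬ (m - (j : ℤ) < 0) := by omega
      simp only [Vfun, if_neg this, mul_zero]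
    have h1 : ∀ k : ℕ, x ^ (k + (n + 1)) * Vfun y (m - (k + (n + 1) : ℕ)) =
        (x ^ (n + 1) * y) * (x * y) ^ k := by
      intro k
      have hlt : m - ((k + (n + 1) : ℕ) : ℤ) < 0 := by push_cast; omega
      have hab : (m - ((k + (n + 1) : ℕ) : ℤ)).natAbs = k + 1 := by push_cast; omega
      simp only [Vfun, if_pos hlt, hab, pow_add, mul_pow, pow_succ, pow_one]
      ring
    rw [← hsum, h0, zero_add, tsum_congr h1, tsum_mul_left, hgeom]
    have hU : Ufun x m = x ^ n := by simp [Ufun, hm, hn]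
    have hV : Vfun y m = 0 := by simp [Vfun, not_lt.mpr hm]
    rw [hU, hV]
    field_simp
    ring

lemma Tstep (x r1 r2 r3 y a b c d : ℝ) (m : ℤ) (hx : |x| < 1) (hy : |y| < 1)
    (hx1 : x ≠ r1) (hx2 : x ≠ r2) (hx3 : x ≠ r3) :
    ∑' j : ℕ, x ^ j * (a * Ufun r1 (m - j) + b * Ufun r2 (m - j) + c * Ufun r3 (m - j)
        + d * Vfun y (m - j)) =
      a * (r1 / (r1 - x) * Ufun r1 m + x / (x - r1) * Ufun x m)
      + b * (r2 / (r2 - x) * Ufun r2 m + x / (x - r2) * Ufun x m)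
      + c * (r3 / (r3 - x) * Ufun r3 m + x / (x - r3) * Ufun x m)
      + d * (x * y / (1 - x * y) * Ufun x m + 1 / (1 - x * y) * Vfun y m) := by
  have s1 := (summable_U x r1 m).mul_left a
  have s2 := (summable_U x r2 m).mul_left b
  have s3 := (summable_U x r3 m).mul_left c
  have s4 := (summable_V x y hx hy m).mul_left d
  have e : ∀ j : ℕ, x ^ j * (a * Ufun r1 (m - j) + b * Ufun r2 (m - j) + c * Ufun r3 (m - j)
      + d * Vfun y (m - j)) =
      a * (x ^ j * Ufun r1 (m - j)) + b * (x ^ j * Ufun r2 (m - j))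
      + (c * (x ^ j * Ufun r3 (m - j)) + d * (x ^ j * Vfun y (m - j))) := by
    intro j; ring
  rw [tsum_congr e, Summable.tsum_add (s1.add s2) (s3.add s4), Summable.tsum_add s1 s2, Summable.tsum_add s3 s4,
    tsum_mul_left, tsum_mul_left, tsum_mul_left, tsum_mul_left,
    sum_U x r1 hx1 m, sum_U x r2 hx2 m, sum_U x r3 hx3 m, sum_V x y hx hy m]
  ring

theorem stmt_12 (l1 l2 l3 l4 : ℝ) (h1 : |l1| < 1) (h2 : |l2| < 1) (h3 : |l3| < 1)
    (h4 : |l4| < 1) (h12 : l1 ≠ l2) (h13 : l1 ≠ l3) (h14 : l1 ≠ l4)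
    (h23 : l2 ≠ l3) (h24 : l2 ≠ l4) (h34 : l3 ≠ l4) (S : ℕ) :
    ∑' t : ℕ × ℕ × ℕ,
        l1 ^ t.1 * l2 ^ t.2.1 * l3 ^ t.2.2 * l4 ^ ((S : ℤ) - t.1 - t.2.1 - t.2.2).natAbs =
      l1 ^ (S + 3) * (1 - l4 ^ 2) / ((l1 - l2) * (l1 - l3) * (l1 - l4) * (1 - l1 * l4)) +
      l2 ^ (S + 3) * (1 - l4 ^ 2) / ((l2 - l1) * (l2 - l3) * (l2 - l4) * (1 - l2 * l4)) +
      l3 ^ (S + 3) * (1 - l4 ^ 2) / ((l3 - l1) * (l3 - l2) * (l3 - l4) * (1 - l3 * l4)) +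
      l4 ^ (S + 3) / ((l4 - l1) * (l4 - l2) * (l4 - l3)) := by
  have d12 : l1 - l2 ≠ 0 := sub_ne_zero.mpr h12
  have d13 : l1 - l3 ≠ 0 := sub_ne_zero.mpr h13
  have d14 : l1 - l4 ≠ 0 := sub_ne_zero.mpr h14
  have d23 : l2 - l3 ≠ 0 := sub_ne_zero.mpr h23
  have d24 : l2 - l4 ≠ 0 := sub_ne_zero.mpr h24
  have d34 : l3 - l4 ≠ 0 := sub_ne_zero.mpr h34
  have d21 : l2 - l1 ≠ 0 := sub_ne_zero.mpr (Ne.symm h12)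
  have d31 : l3 - l1 ≠ 0 := sub_ne_zero.mpr (Ne.symm h13)
  have d41 : l4 - l1 ≠ 0 := sub_ne_zero.mpr (Ne.symm h14)
  have d32 : l3 - l2 ≠ 0 := sub_ne_zero.mpr (Ne.symm h23)
  have d42 : l4 - l2 ≠ 0 := sub_ne_zero.mpr (Ne.symm h24)
  have d43 : l4 - l3 ≠ 0 := sub_ne_zero.mpr (Ne.symm h34)
  have one_sub : ∀ x : ℝ, |x| < 1 → (1 : ℝ) - x * l4 ≠ 0 := by
    intro x hx h
    have hxl : |x * l4| < 1 := by
      rw [abs_mul]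
      nlinarith [abs_nonneg x, abs_nonneg l4]
    have : x * l4 = 1 := by linarith
    rw [this] at hxl
    simp at hxl
  have q1 : (1 : ℝ) - l1 * l4 ≠ 0 := one_sub l1 h1
  have q2 : (1 : ℝ) - l2 * l4 ≠ 0 := one_sub l2 h2
  have q3 : (1 : ℝ) - l3 * l4 ≠ 0 := one_sub l3 h3
  -- summability
  have hg1 : Summable fun n : ℕ => |l1| ^ n := summable_geometric_of_lt_one (abs_nonneg _) h1
  have hg2 : Summable fun n : ℕ => |l2| ^ n := summable_geometric_of_lt_one (abs_nonneg _) h2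
  have hg3 : Summable fun n : ℕ => |l3| ^ n := summable_geometric_of_lt_one (abs_nonneg _) h3
  have hg23 : Summable (fun p : ℕ × ℕ => |l2| ^ p.1 * |l3| ^ p.2) :=
    hg2.mul_of_nonneg hg3 (fun _ => pow_nonneg (abs_nonneg _) _)
      (fun _ => pow_nonneg (abs_nonneg _) _)
  have hg123 : Summable (fun t : ℕ × ℕ × ℕ => |l1| ^ t.1 * (|l2| ^ t.2.1 * |l3| ^ t.2.2)) :=
    hg1.mul_of_nonneg hg23 (fun _ => pow_nonneg (abs_nonneg _) _)
      (fun p => mul_nonneg (pow_nonneg (abs_nonneg _) _) (pow_nonneg (abs_nonneg _) _))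
  have hf : Summable (fun t : ℕ × ℕ × ℕ =>
      l1 ^ t.1 * l2 ^ t.2.1 * l3 ^ t.2.2 * l4 ^ ((S : ℤ) - t.1 - t.2.1 - t.2.2).natAbs) := by
    apply Summable.of_norm_bounded hg123
    intro t
    rw [Real.norm_eq_abs, abs_mul, abs_mul, abs_mul, abs_pow, abs_pow, abs_pow, abs_pow]
    have h4p : |l4| ^ ((S : ℤ) - t.1 - t.2.1 - t.2.2).natAbs ≤ 1 :=
      pow_le_one₀ (abs_nonneg _) h4.le
    calc |l1| ^ t.1 * |l2| ^ t.2.1 * |l3| ^ t.2.2 * |l4| ^ ((S : ℤ) - t.1 - t.2.1 - t.2.2).natAbs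
        ≤ |l1| ^ t.1 * |l2| ^ t.2.1 * |l3| ^ t.2.2 * 1 := by
          apply mul_le_mul_of_nonneg_left h4p
          positivity
      _ = |l1| ^ t.1 * (|l2| ^ t.2.1 * |l3| ^ t.2.2) := by ring
  -- step 3 : innermost sum
  have hW : ∀ k : ℤ, (l4 : ℝ) ^ k.natAbs =
      0 * Ufun l4 k + 0 * Ufun l4 k + 1 * Ufun l4 k + 1 * Vfun l4 k := by
    intro k
    rcases le_or_gt 0 k with h | h
    · simp [Ufun, Vfun, h, not_lt.mpr h]
    · simp [Ufun, Vfun, h, not_le.mpr h]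
  have inner3 : ∀ m : ℤ, (∑' j : ℕ, l3 ^ j * l4 ^ ((m - j).natAbs)) = ((l3 * (1 - l4 ^ 2) / ((l3 - l4) * (1 - l3 * l4))) * Ufun l3 (m) + (l4 / (l4 - l3)) * Ufun l4 (m) + 0 * Ufun l4 (m) + (1 / (1 - l3 * l4)) * Vfun l4 (m)) := by
    intro m
    have e : ∀ j : ℕ, l3 ^ j * l4 ^ ((m - j).natAbs) =
        l3 ^ j * (0 * Ufun l4 (m - j) + 0 * Ufun l4 (m - j) + 1 * Ufun l4 (m - j)
          + 1 * Vfun l4 (m - j)) := by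
      intro j; rw [hW (m - j)]
    rw [tsum_congr e, Tstep l3 l4 l4 l4 l4 0 0 1 1 m h3 h4 h34 h34 h34]
    have ca : l3 / (l3 - l4) + l3 * l4 / (1 - l3 * l4)
        = l3 * (1 - l4 ^ 2) / ((l3 - l4) * (1 - l3 * l4)) := by
      field_simp
      ring
    rw [← ca]
    ring
  -- step 2
  have inner2 : ∀ m : ℤ, (∑' j2 : ℕ, l2 ^ j2 * ∑' j3 : ℕ, l3 ^ j3 * l4 ^ ((m - j2 - j3).natAbs))
      = ((l2 ^ 2 * (1 - l4 ^ 2) / ((l2 - l3) * (l2 - l4) * (1 - l2 * l4))) * Ufun l2 (m) + (l3 ^ 2 * (1 - l4 ^ 2) / ((l3 - l2) * (l3 - l4) * (1 - l3 * l4))) * Ufun l3 (m) + (l4 ^ 2 / ((l4 - l2) * (l4 - l3))) * Ufun l4 (m) + (1 / ((1 - l2 * l4) * (1 - l3 * l4))) * Vfun l4 (m)) := by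
    intro m
    have e : ∀ j2 : ℕ, l2 ^ j2 * (∑' j3 : ℕ, l3 ^ j3 * l4 ^ ((m - j2 - j3).natAbs)) =
        l2 ^ j2 * ((l3 * (1 - l4 ^ 2) / ((l3 - l4) * (1 - l3 * l4))) * Ufun l3 (m - j2) + (l4 / (l4 - l3)) * Ufun l4 (m - j2) + 0 * Ufun l4 (m - j2) + (1 / (1 - l3 * l4)) * Vfun l4 (m - j2)) := by
      intro j2; rw [inner3 (m - j2)]
    rw [tsum_congr e,
      Tstep l2 l3 l4 l4 l4 (l3 * (1 - l4 ^ 2) / ((l3 - l4) * (1 - l3 * l4))) (l4 / (l4 - l3)) 0 (1 / (1 - l3 * l4)) m h2 h4 h23 h24 h24]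
    have ca : (l3 * (1 - l4 ^ 2) / ((l3 - l4) * (1 - l3 * l4))) * (l2 / (l2 - l3)) + (l4 / (l4 - l3)) * (l2 / (l2 - l4))
        + (1 / (1 - l3 * l4)) * (l2 * l4 / (1 - l2 * l4)) = (l2 ^ 2 * (1 - l4 ^ 2) / ((l2 - l3) * (l2 - l4) * (1 - l2 * l4))) := by
      rw [div_mul_div_comm, div_mul_div_comm, div_mul_div_comm, div_add_div _ _ (by simp_all) (by simp_all), div_add_div _ _ (by simp_all) (by simp_all), div_eq_div_iff (by simp_all) (by simp_all)]
      ring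
    have cb : (l3 * (1 - l4 ^ 2) / ((l3 - l4) * (1 - l3 * l4))) * (l3 / (l3 - l2)) = (l3 ^ 2 * (1 - l4 ^ 2) / ((l3 - l2) * (l3 - l4) * (1 - l3 * l4))) := by
      field_simp
    have cc : (l4 / (l4 - l3)) * (l4 / (l4 - l2)) = (l4 ^ 2 / ((l4 - l2) * (l4 - l3))) := by
      field_simp
    have cd : (1 / (1 - l3 * l4)) * (1 / (1 - l2 * l4)) = (1 / ((1 - l2 * l4) * (1 - l3 * l4))) := by
      rw [div_mul_div_comm, one_mul]
      ring_nf
    rw [← ca, ← cb, ← cc, ← cd]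
    ring
  -- coefficient identities for the last step
  have c1 : (l2 ^ 2 * (1 - l4 ^ 2) / ((l2 - l3) * (l2 - l4) * (1 - l2 * l4))) * (l1 / (l1 - l2)) + (l3 ^ 2 * (1 - l4 ^ 2) / ((l3 - l2) * (l3 - l4) * (1 - l3 * l4))) * (l1 / (l1 - l3)) + (l4 ^ 2 / ((l4 - l2) * (l4 - l3))) * (l1 / (l1 - l4))
      + (1 / ((1 - l2 * l4) * (1 - l3 * l4))) * (l1 * l4 / (1 - l1 * l4))
      = l1 ^ 3 * (1 - l4 ^ 2) / ((l1 - l2) * (l1 - l3) * (l1 - l4) * (1 - l1 * l4)) := by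
    rw [eq_div_iff (by simp_all [mul_ne_zero_iff]), div_mul_div_comm, div_mul_div_comm, div_mul_div_comm, div_mul_div_comm,
      div_add_div _ _ (by simp_all [mul_ne_zero_iff]) (by simp_all [mul_ne_zero_iff]),
      div_add_div _ _ (by simp_all [mul_ne_zero_iff]) (by simp_all [mul_ne_zero_iff]),
      div_add_div _ _ (by simp_all [mul_ne_zero_iff]) (by simp_all [mul_ne_zero_iff]),
      div_mul_eq_mul_div, div_eq_iff (by simp_all [mul_ne_zero_iff])]
    have e2 : l2 - l3 = -(l3 - l2) := by ring
    have e3 : l2 - l4 = -(l4 - l2) := by ring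
    have e4 : l3 - l4 = -(l4 - l3) := by ring
    ring
  have c2 : (l2 ^ 2 * (1 - l4 ^ 2) / ((l2 - l3) * (l2 - l4) * (1 - l2 * l4))) * (l2 / (l2 - l1))
      = l2 ^ 3 * (1 - l4 ^ 2) / ((l2 - l1) * (l2 - l3) * (l2 - l4) * (1 - l2 * l4)) := by
    field_simp
  have c3 : (l3 ^ 2 * (1 - l4 ^ 2) / ((l3 - l2) * (l3 - l4) * (1 - l3 * l4))) * (l3 / (l3 - l1))
      = l3 ^ 3 * (1 - l4 ^ 2) / ((l3 - l1) * (l3 - l2) * (l3 - l4) * (1 - l3 * l4)) := by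
    field_simp
  have c4 : (l4 ^ 2 / ((l4 - l2) * (l4 - l3))) * (l4 / (l4 - l1))
      = l4 ^ 3 / ((l4 - l1) * (l4 - l2) * (l4 - l3)) := by
    field_simp
  -- assemble
  calc ∑' t : ℕ × ℕ × ℕ,
        l1 ^ t.1 * l2 ^ t.2.1 * l3 ^ t.2.2 * l4 ^ ((S : ℤ) - t.1 - t.2.1 - t.2.2).natAbs
      = ∑' (j1 : ℕ) (p : ℕ × ℕ),
          l1 ^ j1 * l2 ^ p.1 * l3 ^ p.2 * l4 ^ ((S : ℤ) - j1 - p.1 - p.2).natAbs :=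
        Summable.tsum_prod' hf hf.prod_factor
    _ = ∑' (j1 : ℕ) (j2 : ℕ) (j3 : ℕ),
          l1 ^ j1 * l2 ^ j2 * l3 ^ j3 * l4 ^ ((S : ℤ) - j1 - j2 - j3).natAbs :=
        tsum_congr fun j1 => Summable.tsum_prod' (hf.prod_factor j1) (hf.prod_factor j1).prod_factor
    _ = ∑' (j1 : ℕ), l1 ^ j1 * ((l2 ^ 2 * (1 - l4 ^ 2) / ((l2 - l3) * (l2 - l4) * (1 - l2 * l4))) * Ufun l2 ((S : ℤ) - j1) + (l3 ^ 2 * (1 - l4 ^ 2) / ((l3 - l2) * (l3 - l4) * (1 - l3 * l4))) * Ufun l3 ((S : ℤ) - j1) + (l4 ^ 2 / ((l4 - l2) * (l4 - l3))) * Ufun l4 ((S : ℤ) - j1) + (1 / ((1 - l2 * l4) * (1 - l3 * l4))) * Vfun l4 ((S : ℤ) - j1)) := by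
        refine tsum_congr fun j1 => ?_
        have e1 : ∀ j2 : ℕ, (∑' j3 : ℕ,
            l1 ^ j1 * l2 ^ j2 * l3 ^ j3 * l4 ^ ((S : ℤ) - j1 - j2 - j3).natAbs) =
            l1 ^ j1 * (l2 ^ j2 * ∑' j3 : ℕ,
              l3 ^ j3 * l4 ^ (((S : ℤ) - j1) - j2 - j3).natAbs) := by
          intro j2
          rw [← tsum_mul_left, ← tsum_mul_left]
          exact tsum_congr fun j3 => by ring
        rw [tsum_congr e1, tsum_mul_left, inner2 ((S : ℤ) - j1)]
    _ = _ := by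
        rw [Tstep l1 l2 l3 l4 l4 (l2 ^ 2 * (1 - l4 ^ 2) / ((l2 - l3) * (l2 - l4) * (1 - l2 * l4))) (l3 ^ 2 * (1 - l4 ^ 2) / ((l3 - l2) * (l3 - l4) * (1 - l3 * l4))) (l4 ^ 2 / ((l4 - l2) * (l4 - l3))) (1 / ((1 - l2 * l4) * (1 - l3 * l4))) ((S : ℤ)) h1 h4 h12 h13 h14]
        have hU1 : Ufun l1 ((S : ℤ)) = l1 ^ S := by simp [Ufun]
        have hU2 : Ufun l2 ((S : ℤ)) = l2 ^ S := by simp [Ufun]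
        have hU3 : Ufun l3 ((S : ℤ)) = l3 ^ S := by simp [Ufun]
        have hU4 : Ufun l4 ((S : ℤ)) = l4 ^ S := by simp [Ufun]
        have hV4 : Vfun l4 ((S : ℤ)) = 0 := by simp [Vfun]
        rw [hU1, hU2, hU3, hU4, hV4]
        calc (l2 ^ 2 * (1 - l4 ^ 2) / ((l2 - l3) * (l2 - l4) * (1 - l2 * l4))) * (l2 / (l2 - l1) * l2 ^ S + l1 / (l1 - l2) * l1 ^ S)
              + (l3 ^ 2 * (1 - l4 ^ 2) / ((l3 - l2) * (l3 - l4) * (1 - l3 * l4))) * (l3 / (l3 - l1) * l3 ^ S + l1 / (l1 - l3) * l1 ^ S)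
              + (l4 ^ 2 / ((l4 - l2) * (l4 - l3))) * (l4 / (l4 - l1) * l4 ^ S + l1 / (l1 - l4) * l1 ^ S)
              + (1 / ((1 - l2 * l4) * (1 - l3 * l4))) * (l1 * l4 / (1 - l1 * l4) * l1 ^ S + 1 / (1 - l1 * l4) * 0)
            = ((l2 ^ 2 * (1 - l4 ^ 2) / ((l2 - l3) * (l2 - l4) * (1 - l2 * l4))) * (l1 / (l1 - l2)) + (l3 ^ 2 * (1 - l4 ^ 2) / ((l3 - l2) * (l3 - l4) * (1 - l3 * l4))) * (l1 / (l1 - l3)) + (l4 ^ 2 / ((l4 - l2) * (l4 - l3))) * (l1 / (l1 - l4))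
                + (1 / ((1 - l2 * l4) * (1 - l3 * l4))) * (l1 * l4 / (1 - l1 * l4))) * l1 ^ S
              + ((l2 ^ 2 * (1 - l4 ^ 2) / ((l2 - l3) * (l2 - l4) * (1 - l2 * l4))) * (l2 / (l2 - l1))) * l2 ^ S
              + ((l3 ^ 2 * (1 - l4 ^ 2) / ((l3 - l2) * (l3 - l4) * (1 - l3 * l4))) * (l3 / (l3 - l1))) * l3 ^ S
              + ((l4 ^ 2 / ((l4 - l2) * (l4 - l3))) * (l4 / (l4 - l1))) * l4 ^ S := by ring
          _ = _ := by
              rw [c1, c2, c3, c4, pow_add l1 S 3, pow_add l2 S 3, pow_add l3 S 3,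
                pow_add l4 S 3]
              field_simp
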